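/- In the category of commutative R-algebras, the diagram consisting of the map R[X_1,...,X_n]/(X_1^2,...,X_n^2) → R[X_1,...,X_{n+1}]/(X_1^2,...,X_{n+1}^2) induced by X_i ↦ X_i (for i ≤ n), X_{n+1} ↦ 0, followed by the two parallel maps id and the endomorphism sending X_{n+1} ↦ 0 (and X_i ↦ X_i for i ≤ n) of R[X_1,...,X_{n+1}]/(X_1^2,...,X_{n+1}^2), is an equalizer diagram. -/

import Mathlib

set_option synthInstance.maxHeartbeats 1000000
set_option maxHeartbeats 1000000

/-- The ideal `(X₁²,...,Xₙ²)` of `R[X₁,...,Xₙ]`. -/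
noncomputable abbrev sqIdeal (R : Type*) [CommRing R] (n : ℕ) : Ideal (MvPolynomial (Fin n) R) :=
  Ideal.span (Set.range fun i : Fin n => (MvPolynomial.X i : MvPolynomial (Fin n) R) ^ 2)

/-- The Weil algebra `W_{D^n} = R[X₁,...,Xₙ]/(X₁²,...,Xₙ²)`. -/
abbrev WeilDpow (R : Type*) [CommRing R] (n : ℕ) : Type _ :=
  MvPolynomial (Fin n) R ⧸ sqIdeal R n

lemma weil_mk_X_sq {R : Type*} [CommRing R] {n : ℕ} (i : Fin n) :
    (Ideal.Quotient.mk (sqIdeal R n) (MvPolynomial.X i)) ^ 2 = 0 := by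
  rw [← map_pow, Ideal.Quotient.eq_zero_iff_mem]
  exact Ideal.subset_span ⟨i, rfl⟩

lemma weil_algHom_ext {R : Type*} [CommRing R] {n : ℕ} {A : Type*} [CommRing A] [Algebra R A]
    {f g : WeilDpow R n →ₐ[R] A}
    (h : ∀ i : Fin n, f (Ideal.Quotient.mk (sqIdeal R n) (MvPolynomial.X i)) =
      g (Ideal.Quotient.mk (sqIdeal R n) (MvPolynomial.X i))) : f = g := by
  apply Ideal.Quotient.algHom_ext
  apply MvPolynomial.algHom_ext
  intro i
  exact h i

/-- The retraction `W_{D^{n+1}} → W_{D^n}`, `Xᵢ ↦ Xᵢ`, `X_{n+1} ↦ 0`. -/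
noncomputable def weilRetract (R : Type*) [CommRing R] (n : ℕ) :
    WeilDpow R (n + 1) →ₐ[R] WeilDpow R n :=
  Ideal.Quotient.liftₐ _
    (MvPolynomial.aeval (Fin.lastCases 0
      (fun i => Ideal.Quotient.mk (sqIdeal R n) (MvPolynomial.X i)))) (by
    intro a ha
    rw [← RingHom.mem_ker]
    refine Ideal.span_le.2 ?_ ha
    rintro _ ⟨j, rfl⟩
    simp only [SetLike.mem_coe, RingHom.mem_ker, map_pow, MvPolynomial.aeval_X]
    induction j using Fin.lastCases with
    | last => simp
    | cast i => rw [Fin.lastCases_castSucc]; exact weil_mk_X_sq i)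

lemma weilRetract_castSucc {R : Type*} [CommRing R] {n : ℕ} (i : Fin n) :
    weilRetract R n (Ideal.Quotient.mk (sqIdeal R (n + 1)) (MvPolynomial.X i.castSucc)) =
      Ideal.Quotient.mk (sqIdeal R n) (MvPolynomial.X i) := by
  simp [weilRetract, Fin.lastCases_castSucc]
  erw [Ideal.Quotient.lift_mk]
  simp [Fin.lastCases_castSucc]

lemma weilRetract_last {R : Type*} [CommRing R] {n : ℕ} :
    weilRetract R n (Ideal.Quotient.mk (sqIdeal R (n + 1)) (MvPolynomial.X (Fin.last n))) = 0 := by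
  simp [weilRetract]
  erw [Ideal.Quotient.lift_mk]
  simp

theorem weilDpow_equalizer {R : Type*} [CommRing R] (n : ℕ)
    (φ : WeilDpow R n →ₐ[R] WeilDpow R (n + 1))
    (hφ : ∀ i : Fin n,
      φ (Ideal.Quotient.mk (sqIdeal R n) (MvPolynomial.X i)) =
        Ideal.Quotient.mk (sqIdeal R (n + 1)) (MvPolynomial.X i.castSucc))
    (ψ : WeilDpow R (n + 1) →ₐ[R] WeilDpow R (n + 1))
    (hψ₁ : ∀ i : Fin n,
      ψ (Ideal.Quotient.mk (sqIdeal R (n + 1)) (MvPolynomial.X i.castSucc)) =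
        Ideal.Quotient.mk (sqIdeal R (n + 1)) (MvPolynomial.X i.castSucc))
    (hψ₂ : ψ (Ideal.Quotient.mk (sqIdeal R (n + 1)) (MvPolynomial.X (Fin.last n))) = 0) :
    Function.Injective φ ∧ ∀ a : WeilDpow R (n + 1), ψ a = a ↔ a ∈ φ.range := by
  have hretr : (weilRetract R n).comp φ = AlgHom.id R (WeilDpow R n) := by
    apply weil_algHom_ext
    intro i
    simp [hφ i, weilRetract_castSucc]
  have hli : Function.LeftInverse (weilRetract R n) φ := fun x =>
    congrArg (fun f : WeilDpow R n →ₐ[R] WeilDpow R n => f x) hretr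
  have hψφ : ψ = φ.comp (weilRetract R n) := by
    apply weil_algHom_ext
    intro j
    induction j using Fin.lastCases with
    | last => simp [hψ₂, weilRetract_last]
    | cast i => simp [hψ₁ i, weilRetract_castSucc, hφ i]
  refine ⟨hli.injective, fun a => ⟨fun h => ?_, fun ⟨b, hb⟩ => ?_⟩⟩
  · exact ⟨weilRetract R n a, by rw [hψφ] at h; exact h⟩
  · rw [hψφ, ← hb]
    simp [hli b]
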